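/- Let $P, Q$ be complementary projections on $\mathbb{R}^n$ ($P+Q=\mathrm{Id}$), and suppose for all $z$: $-H(P z)+ c_1\|Pz\|^2 + H(Qz) + c_2\|Qz\|^2 \le 0$, where $H(x)=\langle Sx,x\rangle$ for a symmetric matrix $S$, and $c_1,c_2>0$. Then $\|Pz\| \le \frac{\sqrt2+1}{2}\max\{c_1^{-1},c_2^{-1}\}\|Sz\|$ and $\|Qz\| \le \frac{\sqrt2+1}{2}\max\{c_1^{-1},c_2^{-1}\}\|Sz\|$ for all $z\in\mathbb{R}^n$. -/

import Mathlib

lemma aux_scalar_19 (c₁ c₂ x y s M : ℝ) (hc₁ : 0 < c₁) (hc₂ : 0 < c₂)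
    (hx : 0 ≤ x) (hy : 0 ≤ y) (hs : 0 ≤ s)
    (hM1 : 1 ≤ c₁ * M) (hM2 : 1 ≤ c₂ * M) (hM : 0 < M)
    (hkey : c₁ * x ^ 2 + c₂ * y ^ 2 ≤ s * x + s * y) :
    x ≤ (Real.sqrt 2 + 1) / 2 * M * s := by
  have hr0 : (0:ℝ) < Real.sqrt 2 := by positivity
  have hr2 : Real.sqrt 2 ^ 2 = 2 := Real.sq_sqrt (by norm_num)
  -- step1 : c₂*y^2 - s*y ≥ -s^2/(4*c₂), so c₁*x^2 - s*x ≤ s^2/(4*c₂)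
  have step1 : c₁ * x ^ 2 ≤ s * x + s ^ 2 / (4 * c₂) := by
    have h4 : (0:ℝ) < 4 * c₂ := by linarith
    have hyb : s * y - c₂ * y ^ 2 ≤ s ^ 2 / (4 * c₂) := by
      rw [le_div_iff₀ h4]
      nlinarith [sq_nonneg (2 * c₂ * y - s)]
    linarith
  -- step2 : x^2 ≤ M*s*x + M^2*s^2/4
  have step2 : x ^ 2 ≤ M * s * x + M ^ 2 * s ^ 2 / 4 := by
    have h1 : x ^ 2 ≤ c₁ * M * x ^ 2 := by nlinarith [sq_nonneg x]
    have h2 : M * (s ^ 2 / (4 * c₂)) ≤ M ^ 2 * s ^ 2 / 4 := by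
      rw [mul_div_assoc', div_le_div_iff₀ (by positivity) (by norm_num)]
      nlinarith [mul_nonneg hM.le (sq_nonneg s)]
    have h3 : M * (c₁ * x ^ 2) ≤ M * (s * x + s ^ 2 / (4 * c₂)) := by
      exact mul_le_mul_of_nonneg_left step1 hM.le
    nlinarith
  -- step3 : conclude
  nlinarith [sq_nonneg (x - M * s / 2), mul_nonneg (mul_nonneg hr0.le hM.le) hs,
    mul_nonneg hM.le hs, sq_nonneg (x - M * s / 2 - Real.sqrt 2 * M * s / 2)]

/-- Norm estimates for complementary projections via a symmetric operator `S`: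
if `-⟨S Pz, Pz⟩ + c₁‖Pz‖² + ⟨S Qz, Qz⟩ + c₂‖Qz‖² ≤ 0` for all `z`, then
`‖Pz‖, ‖Qz‖ ≤ ((√2+1)/2) max{c₁⁻¹, c₂⁻¹} ‖Sz‖`. -/
theorem stmt_19 {n : ℕ}
    (P Q S : EuclideanSpace ℝ (Fin n) →L[ℝ] EuclideanSpace ℝ (Fin n))
    (hPQ : P + Q = ContinuousLinearMap.id ℝ _)
    (hP : P.comp P = P) (hQ : Q.comp Q = Q)
    (hsym : ∀ x y : EuclideanSpace ℝ (Fin n), (inner ℝ (S x) y : ℝ) = inner ℝ x (S y))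
    (c₁ c₂ : ℝ) (hc₁ : 0 < c₁) (hc₂ : 0 < c₂)
    (hineq : ∀ z : EuclideanSpace ℝ (Fin n),
      -(inner ℝ (S (P z)) (P z) : ℝ) + c₁ * ‖P z‖ ^ 2 +
        (inner ℝ (S (Q z)) (Q z) : ℝ) + c₂ * ‖Q z‖ ^ 2 ≤ 0) :
    ∀ z : EuclideanSpace ℝ (Fin n),
      ‖P z‖ ≤ (Real.sqrt 2 + 1) / 2 * max c₁⁻¹ c₂⁻¹ * ‖S z‖ ∧
      ‖Q z‖ ≤ (Real.sqrt 2 + 1) / 2 * max c₁⁻¹ c₂⁻¹ * ‖S z‖ := by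
  intro z
  have hz : P z + Q z = z := by
    have := congrArg (fun f : EuclideanSpace ℝ (Fin n) →L[ℝ] EuclideanSpace ℝ (Fin n) => f z) hPQ
    simpa using this
  have hSz : S z = S (P z) + S (Q z) := by rw [← map_add, hz]
  -- key identity: ⟨S Qz, Qz⟩ - ⟨S Pz, Pz⟩ = ⟨Sz, Qz⟩ - ⟨Sz, Pz⟩
  have hswap : (inner ℝ (S (P z)) (Q z) : ℝ) = inner ℝ (S (Q z)) (P z) := by
    rw [hsym (P z) (Q z), real_inner_comm]
  have hid : (inner ℝ (S (Q z)) (Q z) : ℝ) - inner ℝ (S (P z)) (P z) =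
      (inner ℝ (S z) (Q z) : ℝ) - inner ℝ (S z) (P z) := by
    rw [hSz, inner_add_left, inner_add_left]
    linarith [hswap]
  -- Cauchy-Schwarz bounds
  have cs1 : |(inner ℝ (S z) (P z) : ℝ)| ≤ ‖S z‖ * ‖P z‖ := abs_real_inner_le_norm _ _
  have cs2 : |(inner ℝ (S z) (Q z) : ℝ)| ≤ ‖S z‖ * ‖Q z‖ := abs_real_inner_le_norm _ _
  have hkey : c₁ * ‖P z‖ ^ 2 + c₂ * ‖Q z‖ ^ 2 ≤ ‖S z‖ * ‖P z‖ + ‖S z‖ * ‖Q z‖ := by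
    have h := hineq z
    have h1 := abs_le.mp cs1
    have h2 := abs_le.mp cs2
    linarith [hid]
  set M := max c₁⁻¹ c₂⁻¹ with hM
  have hM0 : 0 < M := lt_max_of_lt_left (by positivity)
  have hM1 : 1 ≤ c₁ * M := by
    have : c₁⁻¹ ≤ M := le_max_left _ _
    calc (1:ℝ) = c₁ * c₁⁻¹ := by field_simp
    _ ≤ c₁ * M := by nlinarith
  have hM2 : 1 ≤ c₂ * M := by
    have : c₂⁻¹ ≤ M := le_max_right _ _
    calc (1:ℝ) = c₂ * c₂⁻¹ := by field_simp
    _ ≤ c₂ * M := by nlinarith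
  constructor
  · exact aux_scalar_19 c₁ c₂ ‖P z‖ ‖Q z‖ ‖S z‖ M hc₁ hc₂ (norm_nonneg _) (norm_nonneg _)
      (norm_nonneg _) hM1 hM2 hM0 hkey
  · exact aux_scalar_19 c₂ c₁ ‖Q z‖ ‖P z‖ ‖S z‖ M hc₂ hc₁ (norm_nonneg _) (norm_nonneg _)
      (norm_nonneg _) hM2 hM1 hM0 (by linarith)
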